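/- Let π be the strictly alternating policy of length p starting with agent 1 (π = 1212…) for two agents with Borda utilities and uniform independent profiles. Then the expected utilities are (ū_1(π), ū_2(π)) = (p(p+1)/3, (p²−1)/3 + γ_{p+1}/3) if p is even, and (ū_1(π), ū_2(π)) = (p(p+1)/3 + γ_{p+1}/3, (p²−1)/3) if p is odd; consequently the expected utilitarian social welfare is s̄w(π) = (1/3)·[(2p−1)(p+1) + γ_{p+1}]. -/

import Mathlib

open Finset

namespace SeqAlloc

/-- Given an agent's ranking `r` (a bijection sending each item to its position,
position `0` being the most preferred), pick the most preferred item of a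
nonempty set `S` of remaining items. -/
def pickItem {p : ℕ} (r : Equiv.Perm (Fin p)) (S : Finset (Fin p)) (h : S.Nonempty) : Fin p :=
  r.symm ((S.image r).min' (h.image r))

/-- Sequential allocation: the agents in the list take turns; each takes her
most preferred remaining item.  Returns the list of (agent, item) pairs. -/
def allocList {n p : ℕ} (R : Fin n → Equiv.Perm (Fin p)) :
    List (Fin n) → Finset (Fin p) → List (Fin n × Fin p)
  | [], _ => []
  | a :: rest, S =>
    if h : S.Nonempty then
      (a, pickItem (R a) S h) :: allocList R rest (S.erase (pickItem (R a) S h))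
    else []

/-- The utility that agent `i` obtains when the items `Fin p` are allocated
sequentially according to the policy `π` under profile `R`, where an item
ranked in (1-indexed) position `k` by an agent is worth `g k` to her. -/
noncomputable def utilAgent {n p : ℕ} (g : ℕ → ℝ) (R : Fin n → Equiv.Perm (Fin p))
    (π : List (Fin n)) (i : Fin n) : ℝ :=
  ((allocList R π Finset.univ).map
    (fun x => if x.1 = i then g (((R i) x.2).val + 1) else 0)).sum

/-- The expected utility of agent `i` under policy `π` for `p` items and scoring
function `g`, the profiles being drawn uniformly and independently. -/
noncomputable def expectedUtil (n p : ℕ) (g : ℕ → ℝ) (π : List (Fin n)) (i : Fin n) : ℝ :=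
  (∑ R : Fin n → Equiv.Perm (Fin p), utilAgent g R π i) / ((p.factorial : ℝ) ^ n)

/-- Expected Borda utility: an item ranked (1-indexed) in position `k` is worth
`p - k + 1`. -/
noncomputable def expectedBordaUtil (n p : ℕ) (π : List (Fin n)) (i : Fin n) : ℝ :=
  expectedUtil n p (fun k => (p : ℝ) - k + 1) π i

/-- The strictly alternating policy `1212…` of length `p` for two agents. -/
def altPolicy (p : ℕ) : List (Fin 2) :=
  (List.range p).map (fun k => if k % 2 = 0 then 0 else 1)

end SeqAlloc

/-- The sequence `γ` with `γ₁ = γ₂ = 1` and `γ_k = ∏_{j=1}^{⌊(k−1)/2⌋} (2j+1)/(2j)`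
for `k ≥ 3` (the empty product is `1`, so the formula is also valid for `k = 1, 2`). -/
noncomputable def gammaSeq (k : ℕ) : ℝ :=
  ∏ j ∈ Finset.Icc 1 ((k - 1) / 2), (2 * (j : ℝ) + 1) / (2 * (j : ℝ))

namespace Aux
open SeqAlloc Finset
variable {p : ℕ}

lemma pickItem_mem (r : Equiv.Perm (Fin p)) (S : Finset (Fin p)) (h : S.Nonempty) :
    pickItem r S h ∈ S := by
  have h1 := (S.image r).min'_mem (h.image r)
  rw [Finset.mem_image] at h1
  obtain ⟨x, hx, hx'⟩ := h1
  rw [pickItem, ← hx', Equiv.symm_apply_apply]; exact hx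

lemma pickItem_min (r : Equiv.Perm (Fin p)) (S : Finset (Fin p)) (h : S.Nonempty)
    {z : Fin p} (hz : z ∈ S) : r (pickItem r S h) ≤ r z := by
  rw [pickItem, Equiv.apply_symm_apply]
  exact Finset.min'_le _ _ (Finset.mem_image_of_mem r hz)

lemma pickItem_eq (r : Equiv.Perm (Fin p)) (S : Finset (Fin p)) (h : S.Nonempty) (x : Fin p)
    (hx : x ∈ S) (hmin : ∀ z ∈ S, r x ≤ r z) : pickItem r S h = x := by
  apply r.injective
  exact le_antisymm (pickItem_min r S h hx) (hmin _ (pickItem_mem r S h))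

/-- the group (as a finset) of permutations fixing everything outside `S`. -/
def GS (S : Finset (Fin p)) : Finset (Equiv.Perm (Fin p)) :=
  Finset.univ.filter (fun σ => ∀ x, x ∉ S → σ x = x)

lemma mem_GS {S : Finset (Fin p)} {σ : Equiv.Perm (Fin p)} :
    σ ∈ GS S ↔ ∀ x, x ∉ S → σ x = x := by simp [GS]

lemma GS_maps {S : Finset (Fin p)} {σ : Equiv.Perm (Fin p)} (hσ : σ ∈ GS S)
    {x : Fin p} (hx : x ∈ S) : σ x ∈ S := by
  by_contra hc
  have := mem_GS.1 hσ _ hc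
  rw [σ.injective this] at hc; exact hc hx

lemma GS_symm_maps {S : Finset (Fin p)} {σ : Equiv.Perm (Fin p)} (hσ : σ ∈ GS S)
    {y : Fin p} (hy : y ∈ S) : σ.symm y ∈ S := by
  by_contra hc
  have := mem_GS.1 hσ _ hc
  rw [Equiv.apply_symm_apply] at this
  exact hc (this ▸ hy)

lemma swap_mul_mem_GS {S : Finset (Fin p)} {x y : Fin p} (hx : x ∈ S) (hy : y ∈ S)
    {T : Finset (Fin p)} (hT : T ⊆ S) {ρ : Equiv.Perm (Fin p)} (hρ : ρ ∈ GS T) :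
    Equiv.swap x y * ρ ∈ GS S := by
  rw [mem_GS]
  intro z hz
  have hρz : ρ z = z := mem_GS.1 hρ _ (fun hzT => hz (hT hzT))
  have hzx : z ≠ x := fun h => hz (h ▸ hx)
  have hzy : z ≠ y := fun h => hz (h ▸ hy)
  simp [Equiv.Perm.mul_apply, hρz, Equiv.swap_apply_of_ne_of_ne hzx hzy]

lemma card_GS (S : Finset (Fin p)) : (GS S).card = S.card.factorial := by
  classical
  have e1 : {σ : Equiv.Perm (Fin p) // σ ∈ GS S} ≃
      {f : Equiv.Perm (Fin p) // ∀ a, ¬ a ∈ S → f a = a} :=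
    Equiv.subtypeEquivRight (fun σ => by simp [mem_GS])
  have e2 := (Equiv.Perm.subtypeEquivSubtypePerm (fun a => a ∈ S)).symm
  rw [← Fintype.card_coe]
  rw [Fintype.card_congr (e1.trans e2)]
  rw [Fintype.card_perm, Fintype.card_coe]
lemma swap_cancel (a b : Fin p) (σ : Equiv.Perm (Fin p)) :
    Equiv.swap a b * (Equiv.swap a b * σ) = σ := by
  rw [← mul_assoc, Equiv.swap_mul_self, one_mul]

lemma regroup1 {S : Finset (Fin p)} {y : Fin p} (hy : y ∈ S) (F : Equiv.Perm (Fin p) → ℝ) :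
    ∑ σ ∈ GS S, F σ = ∑ x ∈ S, ∑ ρ ∈ GS (S.erase y), F (Equiv.swap x y * ρ) := by
  rw [← Finset.sum_product']
  apply Finset.sum_nbij' (i := fun σ => (σ y, Equiv.swap (σ y) y * σ))
    (j := fun q => Equiv.swap q.1 y * q.2)
  · intro σ hσ
    rw [Finset.mem_product]
    refine ⟨GS_maps hσ hy, mem_GS.2 fun z hz => ?_⟩
    rcases Decidable.em (z = y) with rfl | hzy
    · simp [Equiv.Perm.mul_apply]
    · have hzS : z ∉ S := fun h => hz (Finset.mem_erase.2 ⟨hzy, h⟩)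
      have h1 : σ z = z := mem_GS.1 hσ _ hzS
      have h2 : z ≠ σ y := fun h => hzS (h ▸ GS_maps hσ hy)
      simp [Equiv.Perm.mul_apply, h1, Equiv.swap_apply_of_ne_of_ne h2 hzy]
  · intro q hq
    rw [Finset.mem_product] at hq
    exact swap_mul_mem_GS hq.1 hy (Finset.erase_subset _ _) hq.2
  · intro σ hσ; simp only; rw [swap_cancel]
  · intro q hq
    rw [Finset.mem_product] at hq
    have hρy : q.2 y = y := mem_GS.1 hq.2 _ (Finset.notMem_erase _ _)
    have h1 : (Equiv.swap q.1 y * q.2) y = q.1 := by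
      simp [Equiv.Perm.mul_apply, hρy]
    rw [Prod.ext_iff]
    constructor
    · exact h1
    · simp only [h1]; rw [swap_cancel]
  · intro σ hσ; simp only; rw [swap_cancel]

lemma regroup2 {S : Finset (Fin p)} {y : Fin p} (hy : y ∈ S) (F : Equiv.Perm (Fin p) → ℝ) :
    ∑ σ ∈ GS S, F σ = ∑ x ∈ S, ∑ ρ ∈ GS (S.erase x), F (Equiv.swap x y * ρ) := by
  rw [Finset.sum_sigma']
  apply Finset.sum_nbij' (i := fun σ => ⟨σ.symm y, Equiv.swap (σ.symm y) y * σ⟩)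
    (j := fun q => Equiv.swap q.1 y * q.2)
  · intro σ hσ
    rw [Finset.mem_sigma]
    refine ⟨GS_symm_maps hσ hy, mem_GS.2 fun z hz => ?_⟩
    rcases Decidable.em (z = σ.symm y) with rfl | hzx
    · simp [Equiv.Perm.mul_apply]
    · have hzS : z ∉ S := fun h => hz (Finset.mem_erase.2 ⟨hzx, h⟩)
      have h1 : σ z = z := mem_GS.1 hσ _ hzS
      have h2 : z ≠ y := fun h => hzS (h ▸ hy)
      have h3 : z ≠ σ.symm y := hzx
      simp [Equiv.Perm.mul_apply, h1, Equiv.swap_apply_of_ne_of_ne h3 h2]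
  · intro q hq
    rw [Finset.mem_sigma] at hq
    exact swap_mul_mem_GS hq.1 hy (Finset.erase_subset _ _) hq.2
  · intro σ hσ; simp only; rw [swap_cancel]
  · intro q hq
    obtain ⟨x, ρ⟩ := q
    rw [Finset.mem_sigma] at hq
    have hρx : ρ x = x := mem_GS.1 hq.2 _ (Finset.notMem_erase _ _)
    have h1 : (Equiv.swap x y * ρ).symm y = x := by
      rw [Equiv.symm_apply_eq]
      simp [Equiv.Perm.mul_apply, hρx]
    simp only [h1]
    rw [swap_cancel]
  · intro σ hσ; simp only; rw [swap_cancel]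
lemma eraseIdx_map {α β : Type*} (f : α → β) : ∀ (l : List α) (k : ℕ),
    (l.map f).eraseIdx k = (l.eraseIdx k).map f := by
  intro l
  induction l with
  | nil => intro k; simp
  | cons a l ih =>
    intro k
    cases k with
    | zero => simp
    | succ k => simp [List.eraseIdx_cons_succ, ih]

lemma list_sum_map {α : Type*} (G : α → ℝ) : ∀ (L : List α),
    (L.map G).sum = ∑ k : Fin L.length, G (L.get k) := by
  intro L
  induction L with
  | nil => simp
  | cons a L ih =>
    rw [List.map_cons, List.sum_cons, ih]
    exact (Fin.sum_univ_succ fun i => G ((a :: L).get i)).symm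

lemma sort_cons_min (t : Finset (Fin p)) (h : t.Nonempty) :
    t.sort (· ≤ ·) = t.min' h :: (t.erase (t.min' h)).sort (· ≤ ·) := by
  have hperm : (t.sort (· ≤ ·)).Perm (t.min' h :: (t.erase (t.min' h)).sort (· ≤ ·)) := by
    rw [← Multiset.coe_eq_coe, ← Multiset.cons_coe, Finset.sort_eq, Finset.sort_eq,
      Finset.erase_val, Multiset.cons_erase (t.min'_mem h)]
  have hsorted : List.Pairwise (· ≤ ·) (t.min' h :: (t.erase (t.min' h)).sort (· ≤ ·)) := by
    rw [List.pairwise_cons]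
    refine ⟨fun b hb => ?_, Finset.pairwise_sort _ _⟩
    rw [Finset.mem_sort] at hb
    exact t.min'_le b (Finset.mem_of_mem_erase hb)
  exact List.Perm.eq_of_pairwise' (t.pairwise_sort _) hsorted hperm

lemma sort_erase (t : Finset (Fin p)) {a : Fin p} :
    (t.erase a).sort (· ≤ ·) = (t.sort (· ≤ ·)).erase a := by
  have hperm : ((t.erase a).sort (· ≤ ·)).Perm ((t.sort (· ≤ ·)).erase a) := by
    rw [← Multiset.coe_eq_coe, Finset.sort_eq, ← Multiset.coe_erase, Finset.sort_eq, Finset.erase_val]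
  exact List.Perm.eq_of_pairwise' ((t.erase a).pairwise_sort _)
    (List.Pairwise.sublist List.erase_sublist (t.pairwise_sort _)) hperm

lemma sort_eraseIdx (t : Finset (Fin p)) (k : Fin (t.sort (· ≤ ·)).length) :
    (t.erase ((t.sort (· ≤ ·)).get k)).sort (· ≤ ·) = (t.sort (· ≤ ·)).eraseIdx k := by
  rw [sort_erase]
  exact List.Perm.eq_of_pairwise'
    (List.Pairwise.sublist List.erase_sublist (t.pairwise_sort _))
    (List.Pairwise.sublist (List.eraseIdx_sublist _ _) (t.pairwise_sort _)) (List.erase_getElem k.isLt)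

/-- The decreasing list of `g`-values of the items of `S`, ordered by the ranking `r`. -/
noncomputable def wlist (g : ℕ → ℝ) (r : Equiv.Perm (Fin p)) (S : Finset (Fin p)) : List ℝ :=
  ((S.image r).sort (· ≤ ·)).map (fun j => g (j.val + 1))

lemma wlist_length (g : ℕ → ℝ) (r : Equiv.Perm (Fin p)) (S : Finset (Fin p)) :
    (wlist g r S).length = S.card := by
  rw [wlist, List.length_map, Finset.length_sort, Finset.card_image_of_injective _ r.injective]

lemma wlist_cons (g : ℕ → ℝ) (r : Equiv.Perm (Fin p)) (S : Finset (Fin p)) (h : S.Nonempty) :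
    wlist g r S = g ((r (pickItem r S h)).val + 1) ::
      wlist g r (S.erase (pickItem r S h)) := by
  have hr : r (pickItem r S h) = (S.image r).min' (h.image r) := by
    rw [pickItem, Equiv.apply_symm_apply]
  unfold wlist
  rw [Finset.image_erase r.injective, hr, sort_cons_min (S.image r) (h.image r)]
  rfl

lemma sum_erase_wlist (g : ℕ → ℝ) (r : Equiv.Perm (Fin p)) (S : Finset (Fin p))
    (F : List ℝ → ℝ) :
    ∑ x ∈ S, F (wlist g r (S.erase x)) =
      ∑ k ∈ Finset.range S.card, F ((wlist g r S).eraseIdx k) := by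
  have h1 : ∑ x ∈ S, F (wlist g r (S.erase x)) =
      ∑ j ∈ S.image r, F ((((S.image r).erase j).sort (· ≤ ·)).map (fun j => g (j.val + 1))) := by
    rw [Finset.sum_image (fun x _ y _ h => r.injective h)]
    apply Finset.sum_congr rfl
    intro x _
    rw [wlist, Finset.image_erase r.injective]
  rw [h1]
  set t := S.image r with ht
  have h2 : ∑ j ∈ t, F (((t.erase j).sort (· ≤ ·)).map (fun j => g (j.val + 1))) =
      ((t.toList.map (fun j => F (((t.erase j).sort (· ≤ ·)).map (fun j => g (j.val + 1))))).sum) :=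
    (Finset.sum_map_toList t _).symm
  rw [h2]
  rw [← List.Perm.sum_eq (List.Perm.map _ (Finset.sort_perm_toList (s := t) (r := (· ≤ ·))))]
  rw [list_sum_map]
  have hlen : (t.sort (· ≤ ·)).length = S.card := by
    rw [Finset.length_sort, ht, Finset.card_image_of_injective _ r.injective]
  have h3 : ∀ k : Fin (t.sort (· ≤ ·)).length,
      F ((((t.erase ((t.sort (· ≤ ·)).get k)).sort (· ≤ ·))).map (fun j => g (j.val + 1)))
        = F ((wlist g r S).eraseIdx k) := by
    intro k
    rw [sort_eraseIdx, wlist, ← ht, eraseIdx_map]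
  refine (Fintype.sum_congr _ _ h3).trans ?_
  rw [Fin.sum_univ_eq_sum_range (fun k => F ((wlist g r S).eraseIdx k))
    ((t.sort (· ≤ ·)).length), hlen]
/-- Expected utility of agent `0` in the random-opponent model: the policy is a
list of agents; agent `0` takes the first value of the list, the opponent removes
a uniformly random entry. -/
noncomputable def Em : List (Fin 2) → List ℝ → ℝ
  | [], _ => 0
  | _ :: _, [] => 0
  | a :: rest, x :: w =>
    if a = 0 then x + Em rest w
    else (∑ k ∈ Finset.range (x :: w).length, Em rest ((x :: w).eraseIdx k)) / (x :: w).length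

@[simp] lemma Em_nil (w : List ℝ) : Em [] w = 0 := rfl
@[simp] lemma Em_cons_nil (a : Fin 2) (rest : List (Fin 2)) : Em (a :: rest) [] = 0 := rfl
lemma Em_cons_zero (rest : List (Fin 2)) (x : ℝ) (w : List ℝ) :
    Em (0 :: rest) (x :: w) = x + Em rest w := by simp [Em]
lemma Em_cons_ne {a : Fin 2} (ha : a ≠ 0) (rest : List (Fin 2)) {w : List ℝ} (hw : w ≠ []) :
    Em (a :: rest) w = (∑ k ∈ Finset.range w.length, Em rest (w.eraseIdx k)) / w.length := by
  cases w with
  | nil => exact absurd rfl hw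
  | cons x w => simp [Em, ha]

lemma zipWith_eraseIdx {α : Type*} (f : α → α → α) :
    ∀ (v w : List α) (k : ℕ),
      (List.zipWith f v w).eraseIdx k = List.zipWith f (v.eraseIdx k) (w.eraseIdx k) := by
  intro v
  induction v with
  | nil => intro w k; simp
  | cons x v ih =>
    intro w k
    cases w with
    | nil => simp
    | cons y w =>
      cases k with
      | zero => simp
      | succ k => simp [List.eraseIdx_cons_succ, ih]

lemma Em_linear (c d : ℝ) : ∀ (π : List (Fin 2)) (v w : List ℝ), v.length = w.length →
    Em π (List.zipWith (fun a b => c * a + d * b) v w) = c * Em π v + d * Em π w := by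
  intro π
  induction π with
  | nil => intro v w _; simp
  | cons a rest ih =>
    intro v w hlen
    cases v with
    | nil =>
      cases w with
      | nil => simp
      | cons y w => simp at hlen
    | cons x v =>
      cases w with
      | nil => simp at hlen
      | cons y w =>
        simp only [List.length_cons, Nat.succ_inj] at hlen
        rcases Decidable.em (a = 0) with rfl | ha
        · rw [List.zipWith_cons_cons, Em_cons_zero, Em_cons_zero, Em_cons_zero,
            ih v w hlen]
          ring
        · have hne : (x :: v : List ℝ) ≠ [] := by simp
          have hne' : (y :: w : List ℝ) ≠ [] := by simp
          have hnez : (List.zipWith (fun a b => c * a + d * b) (x :: v) (y :: w)) ≠ [] := by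
            simp
          rw [Em_cons_ne ha _ hnez, Em_cons_ne ha _ hne, Em_cons_ne ha _ hne']
          have hlz : (List.zipWith (fun a b => c * a + d * b) (x :: v) (y :: w)).length
              = (x :: v).length := by
            rw [List.length_zipWith]
            simp [hlen]
          have hlw : ((y : ℝ) :: w).length = (x :: v).length := by simp [hlen]
          rw [hlz, hlw]
          have hsum : ∀ k ∈ Finset.range (x :: v).length,
              Em rest ((List.zipWith (fun a b => c * a + d * b) (x :: v) (y :: w)).eraseIdx k)
              = c * Em rest ((x :: v).eraseIdx k) + d * Em rest (((y : ℝ) :: w).eraseIdx k) := by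
            intro k _
            rw [zipWith_eraseIdx]
            apply ih
            rw [List.length_eraseIdx, List.length_eraseIdx]
            simp [hlen]
          rw [Finset.sum_congr rfl hsum, Finset.sum_add_distrib, ← Finset.mul_sum,
            ← Finset.mul_sum]
          ring

lemma Em_add (π : List (Fin 2)) (v w : List ℝ) (h : v.length = w.length) :
    Em π (List.zipWith (· + ·) v w) = Em π v + Em π w := by
  have := Em_linear 1 1 π v w h
  simpa using this

lemma zipWith_smul_self (c : ℝ) : ∀ (v : List ℝ),
    List.zipWith (fun a b => c * a + 0 * b) v v = v.map (c * ·) := by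
  intro v
  induction v with
  | nil => simp
  | cons x v ih => simp [ih]

lemma Em_smul (c : ℝ) (π : List (Fin 2)) (v : List ℝ) :
    Em π (v.map (c * ·)) = c * Em π v := by
  have := Em_linear c 0 π v v rfl
  rw [zipWith_smul_self] at this
  simpa using this

lemma eraseIdx_replicate (x : ℝ) : ∀ (k m : ℕ), k ≤ m →
    (List.replicate (m + 1) x).eraseIdx k = List.replicate m x := by
  intro k
  induction k with
  | zero => intro m _; simp [List.replicate_succ]
  | succ k ih =>
    intro m hm
    cases m with
    | zero => omega
    | succ m =>
      rw [List.replicate_succ, List.eraseIdx_cons_succ, ih m (by omega),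
        ← List.replicate_succ]

lemma Em_zero : ∀ (π : List (Fin 2)) (m : ℕ), Em π (List.replicate m 0) = 0 := by
  intro π
  induction π with
  | nil => simp
  | cons a rest ih =>
    intro m
    cases m with
    | zero => simp
    | succ m =>
      have hne : (List.replicate (m + 1) (0:ℝ)) ≠ [] := by simp
      rcases Decidable.em (a = 0) with rfl | ha
      · rw [List.replicate_succ, Em_cons_zero, ih]; simp
      · rw [Em_cons_ne ha _ hne]
        have : ∀ k ∈ Finset.range (List.replicate (m+1) (0:ℝ)).length,
            Em rest ((List.replicate (m+1) (0:ℝ)).eraseIdx k) = 0 := by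
          intro k hk
          simp only [List.length_replicate, Finset.mem_range] at hk
          rw [eraseIdx_replicate _ _ _ (by omega), ih]
        rw [Finset.sum_congr rfl this]
        simp

/-- iterated pointwise sums of a family of lists -/
noncomputable def Zs (h : ℕ → List ℝ) (m : ℕ) : ℕ → List ℝ
  | 0 => List.replicate m (0:ℝ)
  | N + 1 => List.zipWith (· + ·) (h N) (Zs h m N)

lemma Zs_length (h : ℕ → List ℝ) (m : ℕ) : ∀ (N : ℕ), (∀ k < N, (h k).length = m) →
    (Zs h m N).length = m := by
  intro N
  induction N with
  | zero => intro _; simp [Zs]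
  | succ N ih =>
    intro hlen
    rw [Zs, List.length_zipWith, ih (fun k hk => hlen k (by omega)),
      hlen N (by omega)]
    simp

lemma getD_zipWith : ∀ (v w : List ℝ), v.length = w.length → ∀ (j : ℕ),
    (List.zipWith (· + ·) v w).getD j 0 = v.getD j 0 + w.getD j 0 := by
  intro v
  induction v with
  | nil => intro w hw j; cases w with
    | nil => simp
    | cons y w => simp at hw
  | cons x v ih =>
    intro w hw j
    cases w with
    | nil => simp at hw
    | cons y w =>
      simp only [List.length_cons, Nat.succ_inj] at hw
      cases j with
      | zero => simp
      | succ j => simpa using ih w hw j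

lemma getD_replicate_zero (m j : ℕ) : (List.replicate m (0:ℝ)).getD j 0 = 0 := by
  rcases Decidable.em (j < m) with h | h
  · rw [List.getD_eq_getElem _ _ (by simpa using h)]
    simp
  · rw [List.getD_eq_default _ _ (by simpa using h)]

lemma Zs_getD (h : ℕ → List ℝ) (m : ℕ) : ∀ (N : ℕ), (∀ k < N, (h k).length = m) →
    ∀ j, (Zs h m N).getD j 0 = ∑ k ∈ Finset.range N, (h k).getD j 0 := by
  intro N
  induction N with
  | zero => intro _ j; simp [Zs, getD_replicate_zero]
  | succ N ih =>
    intro hlen j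
    rw [Zs, getD_zipWith _ _ (by
        rw [hlen N (by omega), Zs_length h m N (fun k hk => hlen k (by omega))]),
      ih (fun k hk => hlen k (by omega)) j, Finset.sum_range_succ]
    ring

lemma Em_sum_family (π : List (Fin 2)) (h : ℕ → List ℝ) (m : ℕ) :
    ∀ (N : ℕ), (∀ k < N, (h k).length = m) →
    ∑ k ∈ Finset.range N, Em π (h k) = Em π (Zs h m N) := by
  intro N
  induction N with
  | zero => intro _; simp [Zs, Em_zero]
  | succ N ih =>
    intro hlen
    rw [Finset.sum_range_succ, ih (fun k hk => hlen k (by omega)), Zs,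
      Em_add π (h N) (Zs h m N) (by
        rw [hlen N (by omega), Zs_length h m N (fun k hk => hlen k (by omega))])]
    ring

/-- the Borda value list `[n, n-1, …, 1]`. -/
noncomputable def wB (n : ℕ) : List ℝ :=
  (List.range n).map (fun k : ℕ => (n : ℝ) - (k : ℝ))

@[simp] lemma wB_length (n : ℕ) : (wB n).length = n := by
  rw [wB, List.length_map, List.length_range]

lemma wB_succ (n : ℕ) : wB (n + 1) = ((n : ℝ) + 1) :: wB n := by
  apply List.ext_getElem
  · rw [wB_length, List.length_cons, wB_length]
  · intro j h1 h2
    simp only [wB, List.getElem_map, List.getElem_range]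
    cases j with
    | zero => rw [List.getElem_cons_zero]; push_cast; ring
    | succ j =>
      rw [List.getElem_cons_succ]
      simp only [wB, List.getElem_map, List.getElem_range]
      push_cast
      ring

lemma wB_getD {n j : ℕ} (hj : j < n) : (wB n).getD j 0 = (n : ℝ) - j := by
  rw [List.getD_eq_getElem _ _ (by simpa using hj)]
  simp only [wB, List.getElem_map, List.getElem_range]

lemma key (π : List (Fin 2)) (n : ℕ) :
    ∑ k ∈ Finset.range (n + 1), Em π ((wB (n + 1)).eraseIdx k)
      = ((n : ℝ) + 2) * Em π (wB n) := by
  have hlen : ∀ k < n + 1, ((wB (n + 1)).eraseIdx k).length = n := by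
    intro k hk
    rw [List.length_eraseIdx]
    simp [hk]
  rw [Em_sum_family π _ n (n + 1) hlen]
  have hz : Zs (fun k => (wB (n + 1)).eraseIdx k) n (n + 1) = (wB n).map (((n : ℝ) + 2) * ·) := by
    apply List.ext_getElem
    · rw [Zs_length _ _ _ hlen]
      simp
    · intro j hj hj'
      have hjn : j < n := by rwa [Zs_length _ _ _ hlen] at hj
      rw [← List.getD_eq_getElem _ 0 hj, ← List.getD_eq_getElem _ 0 hj']
      rw [Zs_getD _ _ _ hlen j]
      have hterm : ∀ k ∈ Finset.range (n + 1),
          ((wB (n + 1)).eraseIdx k).getD j 0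
            = if j < k then ((n : ℝ) + 1) - j else ((n : ℝ) + 1) - (j + 1) := by
        intro k hk
        rw [Finset.mem_range] at hk
        rcases Decidable.em (j < k) with h | h
        · rw [if_pos h, List.getD_eq_getElem _ 0 (by rw [hlen k hk]; exact hjn),
            List.getElem_eraseIdx, dif_pos h, ← List.getD_eq_getElem _ 0, wB_getD (by omega)]
          push_cast; ring
        · rw [if_neg h, List.getD_eq_getElem _ 0 (by rw [hlen k hk]; exact hjn),
            List.getElem_eraseIdx, dif_neg h, ← List.getD_eq_getElem _ 0, wB_getD (by omega)]
          push_cast; ring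
      rw [Finset.sum_congr rfl hterm, Finset.sum_ite, Finset.sum_const, Finset.sum_const]
      have hc1 : (Finset.filter (fun k => j < k) (Finset.range (n + 1))).card = n - j := by
        have : Finset.filter (fun k => j < k) (Finset.range (n + 1)) = Finset.Ico (j + 1) (n + 1) := by
          ext k; simp [Finset.mem_filter, Finset.mem_range, Finset.mem_Ico]; omega
        rw [this, Nat.card_Ico]
        omega
      have hc2 : (Finset.filter (fun k => ¬ j < k) (Finset.range (n + 1))).card = j + 1 := by
        have : Finset.filter (fun k => ¬ j < k) (Finset.range (n + 1)) = Finset.range (j + 1) := by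
          ext k; simp [Finset.mem_filter, Finset.mem_range]; omega
        rw [this, Finset.card_range]
      rw [hc1, hc2]
      have hget : ((wB n).map (((n : ℝ) + 2) * ·)).getD j 0 = ((n : ℝ) + 2) * ((n : ℝ) - j) := by
        rw [List.getD_eq_getElem _ 0 hj', List.getElem_map, ← List.getD_eq_getElem _ 0, wB_getD hjn]
      rw [hget, nsmul_eq_mul, nsmul_eq_mul]
      have hcast : ((n - j : ℕ) : ℝ) = (n : ℝ) - j := by
        rw [Nat.cast_sub (le_of_lt hjn)]
      rw [hcast]
      push_cast
      ring
  rw [hz, Em_smul]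

/-- alternating policy, self (= agent 0) first -/
def altP (n : ℕ) : List (Fin 2) :=
  (List.range n).map (fun k => if k % 2 = 0 then (0 : Fin 2) else 1)

def eflip : Fin 2 → Fin 2 := fun a => if a = 0 then 1 else 0

@[simp] lemma eflip_eflip (a : Fin 2) : eflip (eflip a) = a := by
  fin_cases a <;> rfl

@[simp] lemma map_eflip_eflip (l : List (Fin 2)) : (l.map eflip).map eflip = l := by
  rw [List.map_map]
  simp [Function.comp_def]

lemma altP_succ (n : ℕ) : altP (n + 1) = 0 :: (altP n).map eflip := by
  rw [altP, List.range_succ_eq_map, List.map_cons, List.map_map, altP, List.map_map]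
  congr 1
  apply List.map_congr_left
  intro k _
  simp only [Function.comp_apply, eflip]
  rcases Nat.even_or_odd k with h | h
  · have h0 : k % 2 = 0 := Nat.even_iff.1 h
    have h1 : (k + 1) % 2 = 1 := by omega
    simp [h0, h1]
  · have h0 : k % 2 = 1 := Nat.odd_iff.1 h
    have h1 : (k + 1) % 2 = 0 := by omega
    simp [h0, h1]

lemma altP_flip_succ (n : ℕ) : (altP (n + 1)).map eflip = 1 :: altP n := by
  rw [altP_succ, List.map_cons, map_eflip_eflip]
  rfl

lemma gammaSeq_one : gammaSeq 1 = 1 := by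
  simp [gammaSeq]

lemma gammaSeq_even {n : ℕ} (hn : Even n) : gammaSeq (n + 2) = gammaSeq (n + 1) := by
  obtain ⟨m, rfl⟩ := hn
  have h1 : (m + m + 2 - 1) / 2 = m := by omega
  have h2 : (m + m + 1 - 1) / 2 = m := by omega
  rw [gammaSeq, gammaSeq, h1, h2]

lemma gammaSeq_odd {n : ℕ} (hn : Odd n) :
    gammaSeq (n + 2) = gammaSeq (n + 1) * (((n : ℝ) + 2) / ((n : ℝ) + 1)) := by
  obtain ⟨m, rfl⟩ := hn
  have h1 : (2 * m + 1 + 2 - 1) / 2 = m + 1 := by omega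
  have h2 : (2 * m + 1 + 1 - 1) / 2 = m := by omega
  rw [gammaSeq, gammaSeq, h1, h2, Finset.prod_Icc_succ_top (by omega : 1 ≤ m + 1)]
  congr 1
  push_cast
  ring_nf

noncomputable def fA (n : ℕ) : ℝ :=
  (n : ℝ) * ((n : ℝ) + 1) / 3 + (if Odd n then gammaSeq (n + 1) / 3 else 0)

noncomputable def fB (n : ℕ) : ℝ :=
  ((n : ℝ) ^ 2 - 1) / 3 + (if Even n then gammaSeq (n + 1) / 3 else 0)

theorem EmAB (n : ℕ) : Em (altP n) (wB n) = fA n ∧ Em ((altP n).map eflip) (wB n) = fB n := by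
  induction n with
  | zero =>
    have hB0 : fB 0 = 0 := by rw [fB]; norm_num [gammaSeq_one]
    have hA0 : fA 0 = 0 := by rw [fA]; norm_num
    constructor
    · simp [altP, wB, hA0]
    · simp [altP, wB, hB0]
  | succ n ih =>
    obtain ⟨ihA, ihB⟩ := ih
    constructor
    · rw [altP_succ, wB_succ, Em_cons_zero, ihB, fA, fB]
      rcases Nat.even_or_odd n with h | h
      · rw [if_pos h, if_pos (Even.add_one h), gammaSeq_even h]
        push_cast
        ring
      · rw [if_neg (Nat.not_even_iff_odd.2 h), if_neg (Nat.not_odd_iff_even.2 (Odd.add_one h))]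
        push_cast
        ring
    · rw [altP_flip_succ, wB_succ,
        Em_cons_ne (by decide : (1 : Fin 2) ≠ 0) _ (by simp : ((n : ℝ) + 1) :: wB n ≠ [])]
      have hlen : (((n : ℝ) + 1) :: wB n).length = n + 1 := by simp
      rw [hlen, ← wB_succ, key, ihA, fA, fB]
      have hne : ((n : ℝ) + 1) ≠ 0 := by positivity
      rcases Nat.even_or_odd n with h | h
      · rw [if_neg (Nat.not_odd_iff_even.2 h),
          if_neg (by rw [Nat.even_add_one]; exact fun hc => hc h)]
        field_simp
        push_cast; ring
      · rw [if_pos h, if_pos (Odd.add_one h), gammaSeq_odd h]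
        field_simp
        push_cast; ring
/-- utility of agent 0 when allocation starts from remaining set `S`. -/
noncomputable def utilS (g : ℕ → ℝ) (R : Fin 2 → Equiv.Perm (Fin p))
    (π : List (Fin 2)) (S : Finset (Fin p)) : ℝ :=
  ((allocList R π S).map
    (fun x => if x.1 = 0 then g (((R 0) x.2).val + 1) else 0)).sum

lemma utilAgent_eq_utilS (g : ℕ → ℝ) (R : Fin 2 → Equiv.Perm (Fin p)) (π : List (Fin 2)) :
    utilAgent g R π 0 = utilS g R π Finset.univ := rfl

@[simp] lemma utilS_nil (g : ℕ → ℝ) (R : Fin 2 → Equiv.Perm (Fin p)) (S : Finset (Fin p)) :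
    utilS g R [] S = 0 := rfl

lemma utilS_cons (g : ℕ → ℝ) (R : Fin 2 → Equiv.Perm (Fin p)) (a : Fin 2)
    (π : List (Fin 2)) (S : Finset (Fin p)) (h : S.Nonempty) :
    utilS g R (a :: π) S =
      (if a = 0 then g (((R 0) (pickItem (R a) S h)).val + 1) else 0)
        + utilS g R π (S.erase (pickItem (R a) S h)) := by
  rw [utilS, allocList, dif_pos h, List.map_cons, List.sum_cons]
  rfl


end Aux

namespace Aux
open SeqAlloc Finset
variable {p : ℕ}

lemma fin2_eq_one {a : Fin 2} (ha : a ≠ 0) : a = 1 :=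
  Fin.ext (by have h0 : a.val ≠ 0 := fun h => ha (Fin.ext h); omega)

lemma ML (g : ℕ → ℝ) (r1 : Equiv.Perm (Fin p)) :
    ∀ (π : List (Fin 2)) (S : Finset (Fin p)), π.length ≤ S.card →
      ∀ b : Equiv.Perm (Fin p),
      ∑ σ ∈ GS S, utilS g ![r1, b * σ] π S
        = (S.card.factorial : ℝ) * Em π (wlist g r1 S) := by
  intro π
  induction π with
  | nil =>
    intro S _ b
    simp
  | cons a rest ih =>
    intro S hl b
    have hS : S.Nonempty := Finset.card_pos.1 (lt_of_lt_of_le (Nat.succ_pos _) hl)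
    obtain ⟨m, hm⟩ : ∃ m, S.card = m + 1 :=
      ⟨S.card - 1, by have := Finset.card_pos.2 hS; omega⟩
    have hrest : rest.length ≤ m := by
      rw [List.length_cons, hm] at hl; omega
    rcases Decidable.em (a = 0) with rfl | ha
    · -- agent 0 (self) moves
      have hyS : pickItem r1 S hS ∈ S := pickItem_mem r1 S hS
      have hcard' : (S.erase (pickItem r1 S hS)).card = m := by
        rw [Finset.card_erase_of_mem hyS, hm]; omega
      have hsummand : ∀ σ ∈ GS S, utilS g ![r1, b * σ] (0 :: rest) S
          = g ((r1 (pickItem r1 S hS)).val + 1)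
            + utilS g ![r1, b * σ] rest (S.erase (pickItem r1 S hS)) := by
        intro σ _
        rw [utilS_cons g _ 0 rest S hS]
        simp [Matrix.cons_val_zero]
      rw [Finset.sum_congr rfl hsummand, Finset.sum_add_distrib, Finset.sum_const, card_GS]
      rw [regroup1 hyS (fun σ => utilS g ![r1, b * σ] rest (S.erase (pickItem r1 S hS)))]
      have hinner : ∀ x ∈ S,
          ∑ ρ ∈ GS (S.erase (pickItem r1 S hS)),
            utilS g ![r1, b * (Equiv.swap x (pickItem r1 S hS) * ρ)] rest
              (S.erase (pickItem r1 S hS))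
          = (m.factorial : ℝ) * Em rest (wlist g r1 (S.erase (pickItem r1 S hS))) := by
        intro x _
        have hmulassoc : ∀ ρ : Equiv.Perm (Fin p),
            b * (Equiv.swap x (pickItem r1 S hS) * ρ)
              = (b * Equiv.swap x (pickItem r1 S hS)) * ρ :=
          fun ρ => (mul_assoc _ _ _).symm
        rw [Finset.sum_congr rfl (fun ρ _ => by rw [hmulassoc ρ]),
          ih (S.erase (pickItem r1 S hS)) (by rw [hcard']; exact hrest)
            (b * Equiv.swap x (pickItem r1 S hS)), hcard']
      rw [Finset.sum_congr rfl hinner, Finset.sum_const, hm]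
      rw [wlist_cons g r1 S hS, Em_cons_zero]
      push_cast [Nat.factorial_succ]
      ring
    · -- the opponent moves
      have ha1 : a = 1 := fin2_eq_one ha
      have hyS : pickItem b S hS ∈ S := pickItem_mem b S hS
      rw [regroup2 hyS (fun σ => utilS g ![r1, b * σ] (a :: rest) S)]
      have hsummand : ∀ x ∈ S, ∀ ρ ∈ GS (S.erase x),
          utilS g ![r1, b * (Equiv.swap x (pickItem b S hS) * ρ)] (a :: rest) S
            = utilS g ![r1, (b * Equiv.swap x (pickItem b S hS)) * ρ] rest (S.erase x) := by
        intro x hx ρ hρ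
        have hρx : ρ x = x := mem_GS.1 hρ _ (Finset.notMem_erase _ _)
        have hσS : ∀ z ∈ S, Equiv.swap x (pickItem b S hS) (ρ z) ∈ S := by
          intro z hz
          have hρz : ρ z ∈ S := by
            rcases Decidable.em (z = x) with rfl | hzx
            · rw [hρx]; exact hx
            · exact Finset.mem_of_mem_erase (GS_maps hρ (Finset.mem_erase.2 ⟨hzx, hz⟩))
          rcases Decidable.em (ρ z = x) with h1 | h1
          · rw [h1, Equiv.swap_apply_left]; exact hyS
          · rcases Decidable.em (ρ z = pickItem b S hS) with h2 | h2
            · rw [h2, Equiv.swap_apply_right]; exact hx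
            · rw [Equiv.swap_apply_of_ne_of_ne h1 h2]; exact hρz
        have hRa : (![r1, b * (Equiv.swap x (pickItem b S hS) * ρ)]) a
            = b * (Equiv.swap x (pickItem b S hS) * ρ) := by
          rw [ha1]; rfl
        have hpick : pickItem ((![r1, b * (Equiv.swap x (pickItem b S hS) * ρ)]) a) S hS
            = x := by
          rw [hRa]
          apply pickItem_eq _ _ _ x hx
          intro z hz
          have hx' : (b * (Equiv.swap x (pickItem b S hS) * ρ)) x = b (pickItem b S hS) := by
            simp [Equiv.Perm.mul_apply, hρx]
          rw [hx']
          exact pickItem_min b S hS (hσS z hz)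
        rw [utilS_cons g _ a rest S hS, hpick, if_neg ha, zero_add, ← mul_assoc]
      have hstep : ∀ x ∈ S,
          ∑ ρ ∈ GS (S.erase x),
            utilS g ![r1, b * (Equiv.swap x (pickItem b S hS) * ρ)] (a :: rest) S
          = (m.factorial : ℝ) * Em rest (wlist g r1 (S.erase x)) := by
        intro x hx
        have hcard' : (S.erase x).card = m := by
          rw [Finset.card_erase_of_mem hx, hm]; omega
        rw [Finset.sum_congr rfl (hsummand x hx),
          ih (S.erase x) (by rw [hcard']; exact hrest) (b * Equiv.swap x (pickItem b S hS)),
          hcard']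
      rw [Finset.sum_congr rfl hstep, ← Finset.mul_sum,
        sum_erase_wlist g r1 S (fun w => Em rest w)]
      have hwne : wlist g r1 S ≠ [] := by
        have := wlist_length g r1 S
        intro hc; rw [hc] at this; simp [hm] at this
      rw [Em_cons_ne ha rest hwne, wlist_length, hm]
      push_cast [Nat.factorial_succ]
      have hne : ((m : ℝ) + 1) ≠ 0 := by positivity
      field_simp
end Aux

namespace Aux
open SeqAlloc Finset
variable {p : ℕ}

@[simp] lemma eflip_zero : eflip 0 = 1 := rfl
@[simp] lemma eflip_one : eflip 1 = 0 := rfl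

lemma allocList_flip (R : Fin 2 → Equiv.Perm (Fin p)) :
    ∀ (π : List (Fin 2)) (S : Finset (Fin p)),
    allocList (fun a => R (eflip a)) (π.map eflip) S
      = (allocList R π S).map (fun x => (eflip x.1, x.2)) := by
  intro π
  induction π with
  | nil => intro S; rfl
  | cons a rest ih =>
    intro S
    rw [List.map_cons]
    by_cases h : S.Nonempty
    · simp only [allocList, dif_pos h, List.map_cons, eflip_eflip, ih]
    · simp only [allocList, dif_neg h, List.map_nil]

lemma utilAgent_one_flip (g : ℕ → ℝ) (R : Fin 2 → Equiv.Perm (Fin p)) (π : List (Fin 2)) :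
    utilAgent g R π 1 = utilAgent g (fun a => R (eflip a)) (π.map eflip) 0 := by
  rw [utilAgent, utilAgent, allocList_flip, List.map_map]
  congr 1
  apply List.map_congr_left
  intro x _
  rcases x with ⟨i, it⟩
  fin_cases i <;> simp [eflip]

lemma sum_perm_flip (f : (Fin 2 → Equiv.Perm (Fin p)) → ℝ) :
    ∑ R : Fin 2 → Equiv.Perm (Fin p), f (fun a => R (eflip a)) = ∑ R, f R := by
  apply Fintype.sum_bijective (fun R => fun a => R (eflip a))
  · apply Function.Involutive.bijective
    intro R
    funext a
    simp
  · intro R; rfl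

lemma vec2_eta (R : Fin 2 → Equiv.Perm (Fin p)) : ![R 0, R 1] = R := by
  funext i; fin_cases i <;> rfl

lemma sum_R_split (f : (Fin 2 → Equiv.Perm (Fin p)) → ℝ) :
    ∑ R : Fin 2 → Equiv.Perm (Fin p), f R
      = ∑ r1 : Equiv.Perm (Fin p), ∑ r2 : Equiv.Perm (Fin p), f ![r1, r2] := by
  calc ∑ R : Fin 2 → Equiv.Perm (Fin p), f R
      = ∑ q : Equiv.Perm (Fin p) × Equiv.Perm (Fin p), f ![q.1, q.2] := by
        apply Fintype.sum_bijective (piFinTwoEquiv (fun _ : Fin 2 => Equiv.Perm (Fin p)))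
          (Equiv.bijective _)
        intro R
        simp only [piFinTwoEquiv_apply]
        rw [vec2_eta]
    _ = ∑ r1 : Equiv.Perm (Fin p), ∑ r2 : Equiv.Perm (Fin p), f ![r1, r2] :=
        Fintype.sum_prod_type _

lemma GS_univ : GS (Finset.univ : Finset (Fin p)) = Finset.univ := by
  ext σ; simp [mem_GS]

lemma image_univ_perm (r : Equiv.Perm (Fin p)) :
    (Finset.univ : Finset (Fin p)).image ⇑r = Finset.univ := by
  ext j
  simp only [Finset.mem_image, Finset.mem_univ, iff_true]
  exact ⟨r.symm j, trivial, r.apply_symm_apply j⟩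

lemma sort_univ : (Finset.univ : Finset (Fin p)).sort (· ≤ ·) = List.finRange p := by
  apply List.Perm.eq_of_pairwise' (Finset.pairwise_sort _ _)
    (List.Pairwise.imp le_of_lt (List.pairwise_lt_finRange p)) ?_
  rw [List.perm_ext_iff_of_nodup (Finset.sort_nodup _ _) (List.nodup_finRange p)]
  intro a
  simp [Finset.mem_sort, List.mem_finRange]

lemma wlist_univ (g : ℕ → ℝ) (r1 : Equiv.Perm (Fin p)) :
    wlist g r1 (Finset.univ : Finset (Fin p))
      = (List.finRange p).map (fun j => g (j.val + 1)) := by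
  rw [wlist, image_univ_perm, sort_univ]

lemma finRange_map_comp (F : ℕ → ℝ) :
    (List.finRange p).map (fun j => F j.val) = (List.range p).map F := by
  apply List.ext_getElem
  · simp
  · intro j h1 h2
    simp [List.getElem_finRange, List.getElem_range]

lemma wlist_borda (r1 : Equiv.Perm (Fin p)) :
    wlist (fun k => (p : ℝ) - k + 1) r1 (Finset.univ : Finset (Fin p)) = wB p := by
  rw [wlist_univ, finRange_map_comp (fun k => (p : ℝ) - (k + 1 : ℕ) + 1), wB]
  apply List.map_congr_left
  intro k _
  push_cast
  ring

lemma expected0 (g : ℕ → ℝ) (π : List (Fin 2)) (hπ : π.length ≤ p) :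
    expectedUtil 2 p g π 0 = Em π ((List.finRange p).map (fun j => g (j.val + 1))) := by
  rw [expectedUtil, sum_R_split (fun R => utilAgent g R π 0)]
  have hcard : (Finset.univ : Finset (Fin p)).card = p := by
    rw [Finset.card_univ, Fintype.card_fin]
  have hinner : ∀ r1 : Equiv.Perm (Fin p),
      ∑ r2 : Equiv.Perm (Fin p), utilAgent g ![r1, r2] π 0
        = (p.factorial : ℝ) * Em π ((List.finRange p).map (fun j => g (j.val + 1))) := by
    intro r1
    have h1 : ∀ r2 : Equiv.Perm (Fin p),
        utilAgent g ![r1, r2] π 0 = utilS g ![r1, (1 : Equiv.Perm (Fin p)) * r2] π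
          Finset.univ := by
      intro r2
      rw [one_mul, utilAgent_eq_utilS]
    rw [Fintype.sum_congr _ _ h1]
    have h2 : ∑ r2 : Equiv.Perm (Fin p), utilS g ![r1, (1 : Equiv.Perm (Fin p)) * r2] π
          Finset.univ
        = ∑ σ ∈ GS (Finset.univ : Finset (Fin p)),
            utilS g ![r1, (1 : Equiv.Perm (Fin p)) * σ] π Finset.univ := by
      rw [GS_univ]
    rw [h2, ML g r1 π Finset.univ (by rw [hcard]; exact hπ) 1, hcard, wlist_univ]
  rw [Fintype.sum_congr _ _ hinner, Finset.sum_const, Finset.card_univ, Fintype.card_perm,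
    Fintype.card_fin, nsmul_eq_mul]
  have hne : (p.factorial : ℝ) ≠ 0 := Nat.cast_ne_zero.2 (Nat.factorial_ne_zero p)
  field_simp

lemma expected1 (g : ℕ → ℝ) (π : List (Fin 2)) (hπ : π.length ≤ p) :
    expectedUtil 2 p g π 1
      = Em (π.map eflip) ((List.finRange p).map (fun j => g (j.val + 1))) := by
  have h1 : ∑ R : Fin 2 → Equiv.Perm (Fin p), utilAgent g R π 1
      = ∑ R : Fin 2 → Equiv.Perm (Fin p), utilAgent g R (π.map eflip) 0 := by
    rw [Fintype.sum_congr _ _ (fun R => utilAgent_one_flip g R π)]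
    exact sum_perm_flip (fun R => utilAgent g R (π.map eflip) 0)
  have h2 : expectedUtil 2 p g π 1 = expectedUtil 2 p g (π.map eflip) 0 := by
    rw [expectedUtil, expectedUtil, h1]
  rw [h2, expected0 g (π.map eflip) (by rw [List.length_map]; exact hπ)]

lemma altP_eq : altP p = altPolicy p := rfl

end Aux

/-- For two agents, Borda utilities and uniform independent profiles,
the strictly alternating policy `π* = 1212…` of length `p` has expected utilities
`(ū₁, ū₂) = (p(p+1)/3, (p²−1)/3 + γ_{p+1}/3)` if `p` is even and
`(ū₁, ū₂) = (p(p+1)/3 + γ_{p+1}/3, (p²−1)/3)` if `p` is odd, hence expected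
utilitarian social welfare `(1/3)·[(2p−1)(p+1) + γ_{p+1}]`. -/
theorem stmt2 (p : ℕ) :
    ((Even p →
        SeqAlloc.expectedBordaUtil 2 p (SeqAlloc.altPolicy p) 0 = (p : ℝ) * (p + 1) / 3 ∧
        SeqAlloc.expectedBordaUtil 2 p (SeqAlloc.altPolicy p) 1
          = ((p : ℝ) ^ 2 - 1) / 3 + gammaSeq (p + 1) / 3) ∧
      (Odd p →
        SeqAlloc.expectedBordaUtil 2 p (SeqAlloc.altPolicy p) 0
          = (p : ℝ) * (p + 1) / 3 + gammaSeq (p + 1) / 3 ∧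
        SeqAlloc.expectedBordaUtil 2 p (SeqAlloc.altPolicy p) 1 = ((p : ℝ) ^ 2 - 1) / 3)) ∧
    SeqAlloc.expectedBordaUtil 2 p (SeqAlloc.altPolicy p) 0
        + SeqAlloc.expectedBordaUtil 2 p (SeqAlloc.altPolicy p) 1
      = (1 / 3) * ((2 * (p : ℝ) - 1) * ((p : ℝ) + 1) + gammaSeq (p + 1)) := by
  have hlen : (SeqAlloc.altPolicy p).length ≤ p := by
    rw [SeqAlloc.altPolicy, List.length_map, List.length_range]
  have h0 : SeqAlloc.expectedBordaUtil 2 p (SeqAlloc.altPolicy p) 0 = Aux.fA p := by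
    rw [SeqAlloc.expectedBordaUtil, Aux.expected0 _ _ hlen, ← Aux.wlist_univ (fun k => (p : ℝ) - k + 1) 1,
      Aux.wlist_borda, ← Aux.altP_eq, (Aux.EmAB p).1]
  have h1 : SeqAlloc.expectedBordaUtil 2 p (SeqAlloc.altPolicy p) 1 = Aux.fB p := by
    rw [SeqAlloc.expectedBordaUtil, Aux.expected1 _ _ hlen, ← Aux.wlist_univ (fun k => (p : ℝ) - k + 1) 1,
      Aux.wlist_borda, ← Aux.altP_eq, (Aux.EmAB p).2]
  refine ⟨⟨fun hE => ⟨?_, ?_⟩, fun hO => ⟨?_, ?_⟩⟩, ?_⟩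
  · rw [h0, Aux.fA, if_neg (Nat.not_odd_iff_even.2 hE)]; ring
  · rw [h1, Aux.fB, if_pos hE]
  · rw [h0, Aux.fA, if_pos hO]
  · rw [h1, Aux.fB, if_neg (Nat.not_even_iff_odd.2 hO)]; ring
  · rw [h0, h1, Aux.fA, Aux.fB]
    rcases Nat.even_or_odd p with h | h
    · rw [if_neg (Nat.not_odd_iff_even.2 h), if_pos h]; ring
    · rw [if_pos h, if_neg (Nat.not_even_iff_odd.2 h)]; ring
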